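/- Let Q be the integer program: minimize Σ_{r∈R} x_r subject to Σ_{r∈N(v)} x_r ≥ 1 for all v ∈ V, x_r ∈ {0,1}, where R is a set of disjoint leftward-directed rays, V a set of disjoint vertical segments each intersecting some ray, and N(v) is the set of rays intersecting v. Then the set S returned by the MOD-SSR algorithm satisfies |S| ≤ 2·OPT(Q_l), where OPT(Q_l) is the optimum of the LP relaxation. Consequently OPT(Q) ≤ 2·OPT(Q_l). -/
import Mathlib


attribute [local instance] Classical.propDecidable

/-- A leftward-directed horizontal ray, given by its right endpoint `(x, y)`:
the point set `{(x', y) : x' ≤ x}`. -/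
structure Ray where
  x : ℝ
  y : ℝ

/-- A vertical segment with `x`-coordinate `x` and `y`-range `[lo, hi]`. -/
structure VSeg where
  x : ℝ
  lo : ℝ
  hi : ℝ

/-- A leftward-directed ray intersects a vertical segment iff the segment's
`x`-coordinate is at most the ray's right endpoint and the ray's height lies
in the segment's `y`-range. -/
def hits (r : Ray) (v : VSeg) : Prop :=
  v.x ≤ r.x ∧ v.lo ≤ r.y ∧ r.y ≤ v.hi

/-- A ray `r` of the surviving set `Rset` is critical if some surviving segment
intersects `r` and no other surviving ray. -/
def critical (Rset : Finset Ray) (Vset : Finset VSeg) (r : Ray) : Prop :=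
  r ∈ Rset ∧ ∃ v ∈ Vset, hits r v ∧ ∀ r' ∈ Rset, hits r' v → r' = r

/-- `r'` lies just above `r` within the set `D` of rays. -/
def justAbove (D : Finset Ray) (r r' : Ray) : Prop :=
  r ∈ D ∧ r' ∈ D ∧ r.y < r'.y ∧ ∀ r'' ∈ D, ¬ (r.y < r''.y ∧ r''.y < r'.y)

/-- An execution trace of the MOD-SSR token-passing algorithm on the SSR instance
`(R, V)`.  `Rs i, Vs i, Ss i, Tok i` are the surviving rays, surviving segments,
heuristic solution and tokens at the end of iteration `i`; `pivot i` is the ray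
with smallest right-endpoint `x`-coordinate that passes its token in iteration `i`. -/
structure ModSSRTrace (R : Finset Ray) (V : Finset VSeg) where
  steps : ℕ
  Rs : ℕ → Finset Ray
  Vs : ℕ → Finset VSeg
  Ss : ℕ → Finset Ray
  Tok : ℕ → Ray → Finset Ray
  pivot : ℕ → Ray
  init_R : Rs 0 = R
  init_V : Vs 0 = V
  init_S : Ss 0 = ∅
  init_T : ∀ r, Tok 0 r = {r}
  running : ∀ i < steps, Vs i ≠ ∅
  /-- step (a): collect all rays critical after the previous iteration. -/
  S_step : ∀ i, 1 ≤ i → i ≤ steps →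
    Ss i = Ss (i-1) ∪ (Rs (i-1)).filter (fun r => critical (Rs (i-1)) (Vs (i-1)) r)
  /-- step (b): delete all segments intersecting some solution ray. -/
  V_step : ∀ i, 1 ≤ i → i ≤ steps →
    Vs i = (Vs (i-1)).filter (fun v => ∀ r ∈ Ss i, ¬ hits r v)
  /-- step (c): the pivot is a surviving non-solution ray of smallest right-endpoint
  `x`-coordinate. -/
  pivot_mem : ∀ i, 1 ≤ i → i ≤ steps → pivot i ∈ Rs (i-1) \ Ss i
  pivot_min : ∀ i, 1 ≤ i → i ≤ steps → ∀ r ∈ Rs (i-1) \ Ss i, (pivot i).x ≤ r.x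
  /-- token passing: each label `x` in the pivot's token migrates to a neighbour
  (just above / just below in `Rs (i-1) \ Ss i`) whenever some surviving segment
  intersects `x`, the pivot and that neighbour; then the pivot's token is emptied. -/
  Tok_step : ∀ i, 1 ≤ i → i ≤ steps → ∀ r' : Ray,
    Tok i r' =
      if r' = pivot i then ∅
      else if justAbove (Rs (i-1) \ Ss i) (pivot i) r'
              ∨ justAbove (Rs (i-1) \ Ss i) r' (pivot i) then
        Tok (i-1) r' ∪ (Tok (i-1) (pivot i)).filter
          (fun x => ∃ v ∈ Vs i, hits x v ∧ hits (pivot i) v ∧ hits r' v)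
      else Tok (i-1) r'
  /-- deletion of the pivot and the solution rays. -/
  R_step : ∀ i, 1 ≤ i → i ≤ steps →
    Rs i = (Rs (i-1) \ Ss i).erase (pivot i)
  /-- termination: no segment is left. -/
  term : Vs steps = ∅

namespace SSRAux

variable {R : Finset Ray} {V : Finset VSeg}

lemma y_inj (hRdisj : ∀ r ∈ R, ∀ r' ∈ R, r ≠ r' → r.y ≠ r'.y)
    {a b : Ray} (ha : a ∈ R) (hb : b ∈ R) (h : a.y = b.y) : a = b := by
  by_contra hne; exact hRdisj a ha b hb hne h

lemma exists_justAbove (D : Finset Ray) (s z : Ray) (hs : s ∈ D) (hz : z ∈ D)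
    (hzy : s.y < z.y) : ∃ r ∈ D, justAbove D s r ∧ r.y ≤ z.y := by
  classical
  obtain ⟨r, hr, hmin⟩ := (D.filter (fun w => s.y < w.y)).exists_min_image (fun w => w.y)
    ⟨z, by simp [hz, hzy]⟩
  simp only [Finset.mem_filter] at hr
  refine ⟨r, hr.1, ⟨hs, hr.1, hr.2, ?_⟩, hmin z (by simp [hz, hzy])⟩
  rintro w hw ⟨h1, h2⟩
  exact absurd (hmin w (by simp [hw, h1])) (not_le.mpr h2)

lemma exists_justBelow (D : Finset Ray) (s z : Ray) (hs : s ∈ D) (hz : z ∈ D)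
    (hzy : z.y < s.y) : ∃ r ∈ D, justAbove D r s ∧ z.y ≤ r.y := by
  classical
  obtain ⟨r, hr, hmax⟩ := (D.filter (fun w => w.y < s.y)).exists_max_image (fun w => w.y)
    ⟨z, by simp [hz, hzy]⟩
  simp only [Finset.mem_filter] at hr
  refine ⟨r, hr.1, ⟨hr.1, hs, hr.2, ?_⟩, hmax z (by simp [hz, hzy])⟩
  rintro w hw ⟨h1, h2⟩
  exact absurd (hmax w (by simp [hw, h2])) (not_le.mpr h1)

lemma justAbove_y_eq {D : Finset Ray} {s a b : Ray}
    (ha : justAbove D s a) (hb : justAbove D s b) : a.y = b.y := by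
  by_contra h
  rcases lt_or_gt_of_ne h with hlt | hlt
  · exact hb.2.2.2 a ha.2.1 ⟨ha.2.2.1, hlt⟩
  · exact ha.2.2.2 b hb.2.1 ⟨hb.2.2.1, hlt⟩

lemma justBelow_y_eq {D : Finset Ray} {s a b : Ray}
    (ha : justAbove D a s) (hb : justAbove D b s) : a.y = b.y := by
  by_contra h
  rcases lt_or_gt_of_ne h with hlt | hlt
  · exact ha.2.2.2 b hb.1 ⟨hlt, hb.2.2.1⟩
  · exact hb.2.2.2 a ha.1 ⟨hlt, ha.2.2.1⟩

variable (t : ModSSRTrace R V)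

lemma Rs_succ {j : ℕ} (hj : j < t.steps) :
    t.Rs (j+1) = (t.Rs j \ t.Ss (j+1)).erase (t.pivot (j+1)) := by
  simpa using t.R_step (j+1) (by omega) (by omega)

lemma mem_Vs_succ {j : ℕ} (hj : j < t.steps) {v : VSeg} :
    v ∈ t.Vs (j+1) ↔ v ∈ t.Vs j ∧ ∀ r ∈ t.Ss (j+1), ¬ hits r v := by
  have h := t.V_step (j+1) (by omega) (by omega)
  simp only [Nat.add_sub_cancel] at h
  rw [h, Finset.mem_filter]

lemma Ss_succ {j : ℕ} (hj : j < t.steps) :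
    t.Ss (j+1) = t.Ss j ∪ (t.Rs j).filter (fun r => critical (t.Rs j) (t.Vs j) r) := by
  simpa using t.S_step (j+1) (by omega) (by omega)

lemma pivot_mem' {j : ℕ} (hj : j < t.steps) :
    t.pivot (j+1) ∈ t.Rs j \ t.Ss (j+1) := by
  simpa using t.pivot_mem (j+1) (by omega) (by omega)

lemma pivot_min' {j : ℕ} (hj : j < t.steps) :
    ∀ r ∈ t.Rs j \ t.Ss (j+1), (t.pivot (j+1)).x ≤ r.x := by
  simpa using t.pivot_min (j+1) (by omega) (by omega)

lemma Tok_succ {j : ℕ} (hj : j < t.steps) (r' : Ray) :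
    t.Tok (j+1) r' =
      if r' = t.pivot (j+1) then ∅
      else if justAbove (t.Rs j \ t.Ss (j+1)) (t.pivot (j+1)) r'
              ∨ justAbove (t.Rs j \ t.Ss (j+1)) r' (t.pivot (j+1)) then
        t.Tok j r' ∪ (t.Tok j (t.pivot (j+1))).filter
          (fun x => ∃ v ∈ t.Vs (j+1), hits x v ∧ hits (t.pivot (j+1)) v ∧ hits r' v)
      else t.Tok j r' := by
  simpa using t.Tok_step (j+1) (by omega) (by omega) r'

lemma Rs_succ_subset {j : ℕ} (hj : j < t.steps) : t.Rs (j+1) ⊆ t.Rs j := by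
  rw [Rs_succ t hj]
  exact (Finset.erase_subset _ _).trans (Finset.sdiff_subset)

lemma Vs_succ_subset {j : ℕ} (hj : j < t.steps) : t.Vs (j+1) ⊆ t.Vs j :=
  fun v hv => ((mem_Vs_succ t hj).mp hv).1

lemma Ss_succ_subset {j : ℕ} (hj : j < t.steps) : t.Ss j ⊆ t.Ss (j+1) := by
  rw [Ss_succ t hj]; exact Finset.subset_union_left

lemma Rs_subset_R : ∀ i, i ≤ t.steps → t.Rs i ⊆ R := by
  intro i
  induction i with
  | zero => intro _; rw [t.init_R]
  | succ j ih => intro hj; exact (Rs_succ_subset t (by omega)).trans (ih (by omega))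

lemma Ss_subset_R : ∀ i, i ≤ t.steps → t.Ss i ⊆ R := by
  intro i
  induction i with
  | zero => intro _; rw [t.init_S]; exact Finset.empty_subset _
  | succ j ih =>
    intro hj
    rw [Ss_succ t (by omega)]
    exact Finset.union_subset (ih (by omega))
      ((Finset.filter_subset _ _).trans (Rs_subset_R t j (by omega)))

lemma Vs_subset_V : ∀ i, i ≤ t.steps → t.Vs i ⊆ V := by
  intro i
  induction i with
  | zero => intro _; rw [t.init_V]
  | succ j ih => intro hj; exact (Vs_succ_subset t (by omega)).trans (ih (by omega))

lemma Ss_mono : ∀ i k, i ≤ k → k ≤ t.steps → t.Ss i ⊆ t.Ss k := by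
  intro i k
  induction k with
  | zero => intro h _; rw [Nat.le_zero.mp h]
  | succ n ih =>
    intro hik hn
    rcases Nat.eq_or_lt_of_le hik with h | h
    · rw [h]
    · exact (ih (by omega) (by omega)).trans (Ss_succ_subset t (by omega))

lemma Vs_not_hit : ∀ i, i ≤ t.steps → ∀ v ∈ t.Vs i, ∀ r ∈ t.Ss i, ¬ hits r v := by
  intro i
  cases i with
  | zero => intro _ v _ r hr; rw [t.init_S] at hr; exact absurd hr (Finset.notMem_empty r)
  | succ j =>
    intro hj v hv
    exact ((mem_Vs_succ t (by omega)).mp hv).2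

lemma Tok_succ_pivot {j : ℕ} (hj : j < t.steps) :
    t.Tok (j+1) (t.pivot (j+1)) = ∅ := by
  rw [Tok_succ t hj, if_pos rfl]

lemma mem_Tok_succ {j : ℕ} (hj : j < t.steps) {r ρ : Ray} (hne : r ≠ t.pivot (j+1)) :
    ρ ∈ t.Tok (j+1) r ↔ ρ ∈ t.Tok j r ∨
      ((justAbove (t.Rs j \ t.Ss (j+1)) (t.pivot (j+1)) r
          ∨ justAbove (t.Rs j \ t.Ss (j+1)) r (t.pivot (j+1))) ∧
        ρ ∈ t.Tok j (t.pivot (j+1)) ∧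
        ∃ v ∈ t.Vs (j+1), hits ρ v ∧ hits (t.pivot (j+1)) v ∧ hits r v) := by
  rw [Tok_succ t hj, if_neg hne]
  split_ifs with h
  · simp only [Finset.mem_union, Finset.mem_filter]
    tauto
  · tauto

lemma Tok_succ_mono {j : ℕ} (hj : j < t.steps) {r : Ray} (hne : r ≠ t.pivot (j+1)) :
    t.Tok j r ⊆ t.Tok (j+1) r :=
  fun ρ hρ => (mem_Tok_succ t hj hne).mpr (Or.inl hρ)

lemma coverage (hterm := t.term) : ∀ v ∈ V, ∃ r ∈ t.Ss t.steps, hits r v := by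
  intro v hv
  by_contra hno
  push_neg at hno
  have key : ∀ i, i ≤ t.steps → v ∈ t.Vs i := by
    intro i
    induction i with
    | zero => intro _; rw [t.init_V]; exact hv
    | succ j ih =>
      intro hj
      refine (mem_Vs_succ t (by omega)).mpr ⟨ih (by omega), fun r hr => hno r ?_⟩
      exact Ss_mono t (j+1) t.steps (by omega) le_rfl hr
  have := key t.steps le_rfl
  rw [t.term] at this
  exact absurd this (Finset.notMem_empty v)

lemma Tok_frozen {j : ℕ} (hj : j < t.steps) {r : Ray} (hrS : r ∈ t.Ss (j+1)) :
    ∀ k, j ≤ k → k ≤ t.steps → t.Tok k r = t.Tok j r := by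
  have main : ∀ m, j + m ≤ t.steps → t.Tok (j + m) r = t.Tok j r := by
    intro m
    induction m with
    | zero => intro _; rfl
    | succ m ih =>
      intro hm
      have hlt : j + m < t.steps := by omega
      have hrS' : r ∈ t.Ss (j + m + 1) := Ss_mono t (j+1) (j+m+1) (by omega) (by omega) hrS
      have hnep : r ≠ t.pivot (j + m + 1) := by
        intro h
        have := pivot_mem' t hlt
        rw [← h] at this
        exact (Finset.mem_sdiff.mp this).2 hrS'
      have hnD : r ∉ t.Rs (j+m) \ t.Ss (j+m+1) := fun h => (Finset.mem_sdiff.mp h).2 hrS'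
      rw [show j + (m+1) = (j+m)+1 by omega, Tok_succ t hlt, if_neg hnep, if_neg, ih (by omega)]
      rintro (h | h)
      · exact hnD h.2.1
      · exact hnD h.1
  intro k hjk hk
  have := main (k - j) (by omega)
  rwa [show j + (k - j) = k by omega] at this

lemma invI (hRdisj : ∀ r ∈ R, ∀ r' ∈ R, r ≠ r' → r.y ≠ r'.y) :
    ∀ i, i ≤ t.steps → ∀ v ∈ t.Vs i, ∀ ρ ∈ R, hits ρ v →
      ∃ r ∈ t.Rs i, hits r v ∧ ρ ∈ t.Tok i r := by
  intro i
  induction i with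
  | zero =>
    intro _ v hv ρ hρ hh
    exact ⟨ρ, by rw [t.init_R]; exact hρ, hh, by rw [t.init_T]; exact Finset.mem_singleton_self ρ⟩
  | succ j ih =>
    intro hj v hv ρ hρR hh
    have hj' : j < t.steps := by omega
    have hvj : v ∈ t.Vs j := Vs_succ_subset t hj' hv
    obtain ⟨r, hrR, hrv, hrT⟩ := ih (by omega) v hvj ρ hρR hh
    have hnotS : ∀ s ∈ t.Ss (j+1), ¬ hits s v := ((mem_Vs_succ t hj').mp hv).2
    have hrS : r ∉ t.Ss (j+1) := fun h => hnotS r h hrv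
    set p := t.pivot (j+1) with hp
    by_cases hrp : r = p
    · -- pivot case
      have hpRj : p ∈ t.Rs j := (Finset.mem_sdiff.mp (pivot_mem' t hj')).1
      have hncrit : ¬ critical (t.Rs j) (t.Vs j) p := by
        intro hc
        apply hrS
        rw [hrp, Ss_succ t hj']
        exact Finset.mem_union_right _ (Finset.mem_filter.mpr ⟨hpRj, hc⟩)
      have hpv : hits p v := hrp ▸ hrv
      have hex : ∃ r' ∈ t.Rs j, hits r' v ∧ r' ≠ p := by
        unfold critical at hncrit
        push_neg at hncrit
        exact hncrit hpRj v hvj hpv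
      obtain ⟨r', hr'R, hr'v, hr'ne⟩ := hex
      have hr'S : r' ∉ t.Ss (j+1) := fun h => hnotS r' h hr'v
      have hr'D : r' ∈ t.Rs j \ t.Ss (j+1) := Finset.mem_sdiff.mpr ⟨hr'R, hr'S⟩
      have hpD : p ∈ t.Rs j \ t.Ss (j+1) := pivot_mem' t hj'
      have hsubR : t.Rs j ⊆ R := Rs_subset_R t j (by omega)
      have hyne : p.y ≠ r'.y := fun h => hr'ne (y_inj hRdisj (hsubR hr'R) (hsubR hpRj) h.symm)
      have hmin := pivot_min' t hj'
      rcases lt_or_gt_of_ne hyne with hlt | hlt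
      · obtain ⟨r'', hr''D, hJA, hle⟩ :=
          exists_justAbove (t.Rs j \ t.Ss (j+1)) p r' hpD hr'D hlt
        have hr''v : hits r'' v :=
          ⟨hpv.1.trans (hmin r'' hr''D), le_trans hpv.2.1 (le_of_lt hJA.2.2.1),
            le_trans hle hr'v.2.2⟩
        have hr''ne : r'' ≠ p := fun h => absurd hJA.2.2.1 (by rw [h]; exact lt_irrefl _)
        refine ⟨r'', ?_, hr''v, ?_⟩
        · rw [Rs_succ t hj']; exact Finset.mem_erase.mpr ⟨hr''ne, hr''D⟩
        · exact (mem_Tok_succ t hj' hr''ne).mpr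
            (Or.inr ⟨Or.inl hJA, (show ρ ∈ t.Tok j p from hrp ▸ hrT), v, hv, hh, hpv, hr''v⟩)
      · obtain ⟨r'', hr''D, hJA, hle⟩ :=
          exists_justBelow (t.Rs j \ t.Ss (j+1)) p r' hpD hr'D hlt
        have hr''v : hits r'' v :=
          ⟨hpv.1.trans (hmin r'' hr''D), le_trans hr'v.2.1 hle,
            le_trans (le_of_lt hJA.2.2.1) hpv.2.2⟩
        have hr''ne : r'' ≠ p := fun h => absurd hJA.2.2.1 (by rw [h]; exact lt_irrefl _)
        refine ⟨r'', ?_, hr''v, ?_⟩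
        · rw [Rs_succ t hj']; exact Finset.mem_erase.mpr ⟨hr''ne, hr''D⟩
        · exact (mem_Tok_succ t hj' hr''ne).mpr
            (Or.inr ⟨Or.inr hJA, (show ρ ∈ t.Tok j p from hrp ▸ hrT), v, hv, hh, hpv, hr''v⟩)
    · -- non-pivot surviving case
      refine ⟨r, ?_, hrv, Tok_succ_mono t hj' hrp hrT⟩
      rw [Rs_succ t hj']
      exact Finset.mem_erase.mpr ⟨hrp, Finset.mem_sdiff.mpr ⟨hrR, hrS⟩⟩
def holdsB (Rcur Scur : Finset Ray) (Tk : Ray → Finset Ray) (ρ : Ray) : Prop :=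
  ρ ∉ Rcur ∧
  (∀ r, ρ ∈ Tk r → (r ∈ Rcur ∨ r ∈ Scur) ∧ r ≠ ρ ∧ ρ.x ≤ r.x ∧
    (∀ z ∈ Rcur, ¬(ρ.y < z.y ∧ z.y < r.y) ∧ ¬(r.y < z.y ∧ z.y < ρ.y))) ∧
  (∀ r r', ρ ∈ Tk r → ρ ∈ Tk r' → r ≠ r' →
    (r.y < ρ.y ∧ ρ.y < r'.y) ∨ (r'.y < ρ.y ∧ ρ.y < r.y))

lemma invJ (hRdisj : ∀ r ∈ R, ∀ r' ∈ R, r ≠ r' → r.y ≠ r'.y) (ρ : Ray) (hρ : ρ ∈ R) :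
    ∀ i, i ≤ t.steps →
      (∀ r, ρ ∈ t.Tok i r → r = ρ) ∨ holdsB (t.Rs i) (t.Ss i) (t.Tok i) ρ := by
  intro i
  induction i with
  | zero =>
    intro _
    left
    intro r hr
    rw [t.init_T] at hr
    exact (Finset.mem_singleton.mp hr).symm
  | succ j ih =>
    intro hj
    have hj' : j < t.steps := by omega
    have hpD : t.pivot (j+1) ∈ t.Rs j \ t.Ss (j+1) := pivot_mem' t hj'
    have hpRj : t.pivot (j+1) ∈ t.Rs j := (Finset.mem_sdiff.mp hpD).1
    have hmin := pivot_min' t hj'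
    have hRs1 : t.Rs (j+1) = (t.Rs j \ t.Ss (j+1)).erase (t.pivot (j+1)) := Rs_succ t hj'
    have hRj : t.Rs j ⊆ R := Rs_subset_R t j (by omega)
    have hSjR : t.Ss j ⊆ R := Ss_subset_R t j (by omega)
    have hTokp : t.Tok (j+1) (t.pivot (j+1)) = ∅ := Tok_succ_pivot t hj'
    have hclass : ∀ r, ρ ∈ t.Tok (j+1) r → r ≠ t.pivot (j+1) ∧ (ρ ∈ t.Tok j r ∨
        ((justAbove (t.Rs j \ t.Ss (j+1)) (t.pivot (j+1)) r
            ∨ justAbove (t.Rs j \ t.Ss (j+1)) r (t.pivot (j+1))) ∧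
          ρ ∈ t.Tok j (t.pivot (j+1)) ∧
          ∃ v ∈ t.Vs (j+1), hits ρ v ∧ hits (t.pivot (j+1)) v ∧ hits r v)) := by
      intro r hr
      have hne : r ≠ t.pivot (j+1) := by
        intro h; rw [h, hTokp] at hr; exact absurd hr (Finset.notMem_empty ρ)
      exact ⟨hne, (mem_Tok_succ t hj' hne).mp hr⟩
    rcases ih (by omega) with hA | hB
    · -- case (a) at time j
      by_cases hpρ : t.pivot (j+1) = ρ
      · -- pivot = ρ : transition to (b)
        right
        have hnew : ∀ r, ρ ∈ t.Tok (j+1) r →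
            (justAbove (t.Rs j \ t.Ss (j+1)) (t.pivot (j+1)) r
              ∨ justAbove (t.Rs j \ t.Ss (j+1)) r (t.pivot (j+1))) ∧ r ≠ t.pivot (j+1) := by
          intro r hr
          obtain ⟨hne, hcase⟩ := hclass r hr
          rcases hcase with hold | ⟨hnbr, _, _⟩
          · exact absurd ((hA r hold).trans hpρ.symm) hne
          · exact ⟨hnbr, hne⟩
        refine ⟨?_, ?_, ?_⟩
        · rw [hRs1]
          intro h
          exact (Finset.mem_erase.mp h).1 hpρ.symm
        · intro r hr
          obtain ⟨hnbr, hne⟩ := hnew r hr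
          have hrD : r ∈ t.Rs j \ t.Ss (j+1) := by
            rcases hnbr with h | h; exacts [h.2.1, h.1]
          refine ⟨Or.inl ?_, fun h => hne (h.trans hpρ.symm), ?_, ?_⟩
          · rw [hRs1]; exact Finset.mem_erase.mpr ⟨hne, hrD⟩
          · rw [← hpρ]; exact hmin r hrD
          · intro z hz
            rw [hRs1] at hz
            have hzD := (Finset.mem_erase.mp hz).2
            constructor
            · rintro ⟨h1, h2⟩
              rcases hnbr with hja | hjb
              · exact hja.2.2.2 z hzD ⟨by rw [hpρ]; exact h1, h2⟩
              · have : r.y < ρ.y := by rw [← hpρ]; exact hjb.2.2.1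
                linarith
            · rintro ⟨h1, h2⟩
              rcases hnbr with hja | hjb
              · have : ρ.y < r.y := by rw [← hpρ]; exact hja.2.2.1
                linarith
              · exact hjb.2.2.2 z hzD ⟨h1, by rw [hpρ]; exact h2⟩
        · intro r r' hr hr' hne
          obtain ⟨hnbr, _⟩ := hnew r hr
          obtain ⟨hnbr', _⟩ := hnew r' hr'
          have hDR : t.Rs j \ t.Ss (j+1) ⊆ R := Finset.sdiff_subset.trans hRj
          rcases hnbr with hja | hjb <;> rcases hnbr' with hja' | hjb'
          · exact absurd (y_inj hRdisj (hDR hja.2.1) (hDR hja'.2.1)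
              (justAbove_y_eq hja hja')) hne
          · exact Or.inr ⟨by rw [← hpρ]; exact hjb'.2.2.1, by rw [← hpρ]; exact hja.2.2.1⟩
          · exact Or.inl ⟨by rw [← hpρ]; exact hjb.2.2.1, by rw [← hpρ]; exact hja'.2.2.1⟩
          · exact absurd (y_inj hRdisj (hDR hjb.1) (hDR hjb'.1)
              (justBelow_y_eq hjb hjb')) hne
      · -- pivot ≠ ρ : stays (a)
        left
        intro r hr
        obtain ⟨hne, hcase⟩ := hclass r hr
        rcases hcase with hold | ⟨_, hTp, _⟩
        · exact hA r hold
        · exact absurd (hA _ hTp) hpρ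
    · -- case (b) at time j
      right
      obtain ⟨hb1, hHold, hOpp⟩ := hB
      have hρnotD : ρ ∉ t.Rs j \ t.Ss (j+1) := fun h => hb1 (Finset.mem_sdiff.mp h).1
      have memR : ∀ b, ρ ∈ t.Tok j b → b ∈ R := by
        intro b hb
        rcases (hHold b hb).1 with h | h
        exacts [hRj h, hSjR h]
      have hsideA : ρ ∈ t.Tok j (t.pivot (j+1)) →
          ∀ a, justAbove (t.Rs j \ t.Ss (j+1)) (t.pivot (j+1)) a → ρ.y < a.y := by
        intro hTp a hja
        have haRj : a ∈ t.Rs j := (Finset.mem_sdiff.mp hja.2.1).1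
        have hane : a.y ≠ ρ.y := fun h =>
          (fun hh : a = ρ => hρnotD (hh ▸ hja.2.1)) (y_inj hRdisj (hRj haRj) hρ h)
        rcases lt_or_gt_of_ne hane with h | h
        · exact absurd ⟨hja.2.2.1, h⟩ ((hHold _ hTp).2.2.2 a haRj).2
        · exact h
      have hsideB : ρ ∈ t.Tok j (t.pivot (j+1)) →
          ∀ a, justAbove (t.Rs j \ t.Ss (j+1)) a (t.pivot (j+1)) → a.y < ρ.y := by
        intro hTp a hjb
        have haRj : a ∈ t.Rs j := (Finset.mem_sdiff.mp hjb.1).1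
        have hane : a.y ≠ ρ.y := fun h =>
          (fun hh : a = ρ => hρnotD (hh ▸ hjb.1)) (y_inj hRdisj (hRj haRj) hρ h)
        rcases lt_or_gt_of_ne hane with h | h
        · exact h
        · exact absurd ⟨h, hjb.2.2.1⟩ ((hHold _ hTp).2.2.2 a haRj).1
      refine ⟨fun h => hb1 (Rs_succ_subset t hj' h), ?_, ?_⟩
      · intro r hr
        obtain ⟨hrp, hcase⟩ := hclass r hr
        rcases hcase with hold | ⟨hnbr, hTp, v, hv, hρv, hpv, hrv⟩
        · obtain ⟨hloc, hneq, hx, hbtw⟩ := hHold r hold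
          refine ⟨?_, hneq, hx, fun z hz => hbtw z (Rs_succ_subset t hj' hz)⟩
          rcases hloc with hrRj | hrSj
          · by_cases hS : r ∈ t.Ss (j+1)
            · exact Or.inr hS
            · exact Or.inl (by
                rw [hRs1]
                exact Finset.mem_erase.mpr ⟨hrp, Finset.mem_sdiff.mpr ⟨hrRj, hS⟩⟩)
          · exact Or.inr (Ss_succ_subset t hj' hrSj)
        · obtain ⟨hlocp, hpneρ, hxp, hbtwp⟩ := hHold _ hTp
          have hrD : r ∈ t.Rs j \ t.Ss (j+1) := by
            rcases hnbr with h | h; exacts [h.2.1, h.1]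
          have hrRj : r ∈ t.Rs j := (Finset.mem_sdiff.mp hrD).1
          have hrneρ : r ≠ ρ := fun h => hρnotD (h ▸ hrD)
          refine ⟨Or.inl (by rw [hRs1]; exact Finset.mem_erase.mpr ⟨hrp, hrD⟩), hrneρ,
            le_trans hxp (hmin r hrD), ?_⟩
          intro z hz
          rw [hRs1] at hz
          have hznep := (Finset.mem_erase.mp hz).1
          have hzD := (Finset.mem_erase.mp hz).2
          have hzRj : z ∈ t.Rs j := (Finset.mem_sdiff.mp hzD).1
          have hzyp : z.y ≠ (t.pivot (j+1)).y := fun h =>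
            hznep (y_inj hRdisj (hRj hzRj) (hRj hpRj) h)
          constructor
          · rintro ⟨h1, h2⟩
            rcases hnbr with hja | hjb
            · rcases lt_trichotomy z.y (t.pivot (j+1)).y with hc | hc | hc
              · exact (hbtwp z hzRj).1 ⟨h1, hc⟩
              · exact hzyp hc
              · exact hja.2.2.2 z hzD ⟨hc, h2⟩
            · have := hsideB hTp r hjb
              linarith
          · rintro ⟨h1, h2⟩
            rcases hnbr with hja | hjb
            · have := hsideA hTp r hja
              linarith
            · rcases lt_trichotomy z.y (t.pivot (j+1)).y with hc | hc | hc
              · exact hjb.2.2.2 z hzD ⟨h1, hc⟩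
              · exact hzyp hc
              · exact (hbtwp z hzRj).2 ⟨hc, h2⟩
      · intro r r' hr hr' hne
        obtain ⟨hrp, hcase⟩ := hclass r hr
        obtain ⟨hr'p, hcase'⟩ := hclass r' hr'
        have key : ∀ a b, a ≠ b →
            (justAbove (t.Rs j \ t.Ss (j+1)) (t.pivot (j+1)) a
              ∨ justAbove (t.Rs j \ t.Ss (j+1)) a (t.pivot (j+1))) →
            (∃ v ∈ t.Vs (j+1), hits ρ v ∧ hits (t.pivot (j+1)) v ∧ hits a v) →
            ρ ∈ t.Tok j (t.pivot (j+1)) → b ≠ t.pivot (j+1) → ρ ∈ t.Tok j b →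
            (a.y < ρ.y ∧ ρ.y < b.y) ∨ (b.y < ρ.y ∧ ρ.y < a.y) := by
          intro a b hab hnbr ⟨v, hv, hρv, hpv, hav⟩ hTp hbp hTb
          obtain ⟨hlocp, hpneρ, hxp, hbtwp⟩ := hHold _ hTp
          obtain ⟨hlocb, hbneρ, hxb, hbtwb⟩ := hHold _ hTb
          have haD : a ∈ t.Rs j \ t.Ss (j+1) := by
            rcases hnbr with h | h; exacts [h.2.1, h.1]
          have haRj : a ∈ t.Rs j := (Finset.mem_sdiff.mp haD).1
          have haneρ : a ≠ ρ := fun h => hρnotD (h ▸ haD)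
          have hayne : a.y ≠ ρ.y := fun h => haneρ (y_inj hRdisj (hRj haRj) hρ h)
          have hbR : b ∈ R := memR b hTb
          have hbyne : b.y ≠ ρ.y := fun h => hbneρ (y_inj hRdisj hbR hρ h)
          have habyne : a.y ≠ b.y := fun h => hab (y_inj hRdisj (hRj haRj) hbR h)
          have hopp_bp : (b.y < ρ.y ∧ ρ.y < (t.pivot (j+1)).y) ∨
              ((t.pivot (j+1)).y < ρ.y ∧ ρ.y < b.y) := hOpp b _ hTb hTp hbp
          rcases lt_or_gt_of_ne hayne with ha1 | ha1
          · rcases lt_or_gt_of_ne hbyne with hb1 | hb1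
            · exfalso
              have hjb : justAbove (t.Rs j \ t.Ss (j+1)) a (t.pivot (j+1)) := by
                rcases hnbr with hja | hjb
                · exact absurd ⟨hja.2.2.1, ha1⟩ (hbtwp a haRj).2
                · exact hjb
              have hpabove : ρ.y < (t.pivot (j+1)).y := by
                rcases hopp_bp with ⟨_, h⟩ | ⟨h, _⟩
                · exact h
                · linarith
              have hayb : a.y < b.y := by
                rcases lt_or_gt_of_ne habyne with h | h
                · exact h
                · exact absurd ⟨h, ha1⟩ (hbtwb a haRj).2
              have hbhit : hits b v :=
                ⟨le_trans hρv.1 hxb, le_trans hav.2.1 hayb.le, le_trans hb1.le hρv.2.2⟩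
              by_cases hbS : b ∈ t.Ss (j+1)
              · exact Vs_not_hit t (j+1) (by omega) v hv b hbS hbhit
              · have hbD : b ∈ t.Rs j \ t.Ss (j+1) := by
                  rcases hlocb with h | h
                  · exact Finset.mem_sdiff.mpr ⟨h, hbS⟩
                  · exact absurd (Ss_succ_subset t hj' h) hbS
                exact hjb.2.2.2 b hbD ⟨hayb, by linarith⟩
            · exact Or.inl ⟨ha1, hb1⟩
          · rcases lt_or_gt_of_ne hbyne with hb1 | hb1
            · exact Or.inr ⟨hb1, ha1⟩
            · exfalso
              have hja : justAbove (t.Rs j \ t.Ss (j+1)) (t.pivot (j+1)) a := by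
                rcases hnbr with hja | hjb
                · exact hja
                · exact absurd ⟨ha1, hjb.2.2.1⟩ (hbtwp a haRj).1
              have hpbelow : (t.pivot (j+1)).y < ρ.y := by
                rcases hopp_bp with ⟨h, _⟩ | ⟨h, _⟩
                · linarith
                · exact h
              have hbya : b.y < a.y := by
                rcases lt_or_gt_of_ne habyne with h | h
                · exact absurd ⟨ha1, h⟩ (hbtwb a haRj).1
                · exact h
              have hbhit : hits b v :=
                ⟨le_trans hρv.1 hxb, le_trans hρv.2.1 hb1.le, le_trans hbya.le hav.2.2⟩
              by_cases hbS : b ∈ t.Ss (j+1)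
              · exact Vs_not_hit t (j+1) (by omega) v hv b hbS hbhit
              · have hbD : b ∈ t.Rs j \ t.Ss (j+1) := by
                  rcases hlocb with h | h
                  · exact Finset.mem_sdiff.mpr ⟨h, hbS⟩
                  · exact absurd (Ss_succ_subset t hj' h) hbS
                exact hja.2.2.2 b hbD ⟨by linarith, hbya⟩
        rcases hcase with hold | ⟨hnbr, hTp, hw⟩ <;>
          rcases hcase' with hold' | ⟨hnbr', hTp', hw'⟩
        · exact hOpp r r' hold hold' hne
        · rcases key r' r (Ne.symm hne) hnbr' hw' hTp' hrp hold with ⟨h1, h2⟩ | ⟨h1, h2⟩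
          · exact Or.inr ⟨h1, h2⟩
          · exact Or.inl ⟨h1, h2⟩
        · exact key r r' hne hnbr hw hTp hr'p hold'
        · have hDR : t.Rs j \ t.Ss (j+1) ⊆ R := Finset.sdiff_subset.trans hRj
          rcases hnbr with hja | hjb <;> rcases hnbr' with hja' | hjb'
          · exact absurd (y_inj hRdisj (hDR hja.2.1) (hDR hja'.2.1)
              (justAbove_y_eq hja hja')) hne
          · exact Or.inr ⟨hsideB hTp r' hjb', hsideA hTp r hja⟩
          · exact Or.inl ⟨hsideB hTp r hjb, hsideA hTp' r' hja'⟩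
          · exact absurd (y_inj hRdisj (hDR hjb.1) (hDR hjb'.1)
              (justBelow_y_eq hjb hjb')) hne

lemma first_entry : ∀ i, i ≤ t.steps → ∀ r ∈ t.Ss i,
    ∃ j, j < i ∧ r ∉ t.Ss j ∧ r ∈ t.Ss (j+1) := by
  intro i
  induction i with
  | zero => intro _ r hr; rw [t.init_S] at hr; exact absurd hr (Finset.notMem_empty r)
  | succ j ih =>
    intro hj r hr
    by_cases h : r ∈ t.Ss j
    · obtain ⟨k, hk, h1, h2⟩ := ih (by omega) r h
      exact ⟨k, by omega, h1, h2⟩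
    · exact ⟨j, by omega, h, hr⟩

end SSRAux

open SSRAux in
/-- Lemma 2: the solution `S` returned by MOD-SSR intersects all
segments, and its cardinality is at most twice the cost of any feasible fractional
solution of the LP relaxation of the SSR covering program; hence
`|S| ≤ 2·OPT(Q_l)` and consequently `OPT(Q) ≤ 2·OPT(Q_l)`. -/
theorem modSSR_two_approx_of_LP (R : Finset Ray) (V : Finset VSeg)
    (hVok : ∀ v ∈ V, v.lo ≤ v.hi)
    (hRdisj : ∀ r ∈ R, ∀ r' ∈ R, r ≠ r' → r.y ≠ r'.y)
    (hVdisj : ∀ v ∈ V, ∀ w ∈ V, v ≠ w → v.x ≠ w.x)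
    (hfeas : ∀ v ∈ V, ∃ r ∈ R, hits r v)
    (t : ModSSRTrace R V)
    (x : Ray → ℝ)
    (hx01 : ∀ r, 0 ≤ x r ∧ x r ≤ 1)
    (hxfeas : ∀ v ∈ V, 1 ≤ ∑ r ∈ R.filter (fun r => hits r v), x r) :
    (∀ v ∈ V, ∃ r ∈ t.Ss t.steps, hits r v) ∧
    ((t.Ss t.steps).card : ℝ) ≤ 2 * ∑ r ∈ R, x r := by
  classical
  refine ⟨coverage t, ?_⟩
  have key1 : ∀ r ∈ t.Ss t.steps,
      (1:ℝ) ≤ ∑ ρ ∈ R.filter (fun ρ => ρ ∈ t.Tok t.steps r), x ρ := by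
    intro r hr
    obtain ⟨j, hjlt, hnot, hin⟩ := first_entry t t.steps le_rfl r hr
    have hcrit : critical (t.Rs j) (t.Vs j) r := by
      rw [Ss_succ t hjlt] at hin
      rcases Finset.mem_union.mp hin with h | h
      · exact absurd h hnot
      · exact (Finset.mem_filter.mp h).2
    obtain ⟨-, v, hvVs, hrv, huniq⟩ := hcrit
    have hfrozen : t.Tok t.steps r = t.Tok j r := by
      rw [Ss_succ t hjlt] at hin
      rcases Finset.mem_union.mp hin with h | h
      · exact absurd h hnot
      · exact Tok_frozen t hjlt (by rw [Ss_succ t hjlt]; exact Finset.mem_union_right _ h)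
          t.steps (by omega) le_rfl
    have hsub : R.filter (fun ρ => hits ρ v) ⊆ R.filter (fun ρ => ρ ∈ t.Tok t.steps r) := by
      intro ρ hρ
      obtain ⟨hρR, hρv⟩ := Finset.mem_filter.mp hρ
      obtain ⟨r'', h1, h2, h3⟩ := invI t hRdisj j (by omega) v hvVs ρ hρR hρv
      have : r'' = r := huniq r'' h1 h2
      rw [this] at h3
      rw [hfrozen]
      exact Finset.mem_filter.mpr ⟨hρR, h3⟩
    calc (1:ℝ) ≤ ∑ ρ ∈ R.filter (fun ρ => hits ρ v), x ρ :=
          hxfeas v (Vs_subset_V t j (by omega) hvVs)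
      _ ≤ _ := Finset.sum_le_sum_of_subset_of_nonneg hsub (fun ρ _ _ => (hx01 ρ).1)
  have key2 : ∀ ρ ∈ R,
      (((t.Ss t.steps).filter (fun r => ρ ∈ t.Tok t.steps r)).card : ℝ) ≤ 2 := by
    intro ρ hρ
    rcases invJ t hRdisj ρ hρ t.steps le_rfl with hA | hB
    · have hsub : (t.Ss t.steps).filter (fun r => ρ ∈ t.Tok t.steps r) ⊆ {ρ} :=
        fun r hr => Finset.mem_singleton.mpr (hA r (Finset.mem_filter.mp hr).2)
      have h1 : ((t.Ss t.steps).filter (fun r => ρ ∈ t.Tok t.steps r)).card ≤ 1 := by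
        simpa using Finset.card_le_card hsub
      calc (((t.Ss t.steps).filter (fun r => ρ ∈ t.Tok t.steps r)).card : ℝ)
          ≤ 1 := by exact_mod_cast h1
        _ ≤ 2 := one_le_two
    · obtain ⟨-, -, hOpp⟩ := hB
      have h2 : ((t.Ss t.steps).filter (fun r => ρ ∈ t.Tok t.steps r)).card ≤ 2 := by
        by_contra hc
        push_neg at hc
        obtain ⟨a, b, c, ha, hb, hcm, hab, hac, hbc⟩ := Finset.two_lt_card_iff.mp hc
        have hA' := (Finset.mem_filter.mp ha).2
        have hB' := (Finset.mem_filter.mp hb).2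
        have hC' := (Finset.mem_filter.mp hcm).2
        rcases hOpp a b hA' hB' hab with ⟨h1, h2⟩ | ⟨h1, h2⟩ <;>
          rcases hOpp a c hA' hC' hac with ⟨h3, h4⟩ | ⟨h3, h4⟩ <;>
          rcases hOpp b c hB' hC' hbc with ⟨h5, h6⟩ | ⟨h5, h6⟩ <;> linarith
      exact_mod_cast h2
  calc ((t.Ss t.steps).card : ℝ)
      = ∑ _r ∈ t.Ss t.steps, (1:ℝ) := by simp
    _ ≤ ∑ r ∈ t.Ss t.steps, ∑ ρ ∈ R.filter (fun ρ => ρ ∈ t.Tok t.steps r), x ρ :=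
        Finset.sum_le_sum key1
    _ = ∑ r ∈ t.Ss t.steps, ∑ ρ ∈ R, if ρ ∈ t.Tok t.steps r then x ρ else 0 := by
        exact Finset.sum_congr rfl fun r _ => Finset.sum_filter _ _
    _ = ∑ ρ ∈ R, ∑ r ∈ t.Ss t.steps, if ρ ∈ t.Tok t.steps r then x ρ else 0 :=
        Finset.sum_comm
    _ = ∑ ρ ∈ R, (((t.Ss t.steps).filter (fun r => ρ ∈ t.Tok t.steps r)).card : ℝ) * x ρ := by
        refine Finset.sum_congr rfl fun ρ _ => ?_
        rw [← Finset.sum_filter, Finset.sum_const, nsmul_eq_mul]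
    _ ≤ ∑ ρ ∈ R, 2 * x ρ :=
        Finset.sum_le_sum fun ρ hρ => mul_le_mul_of_nonneg_right (key2 ρ hρ) (hx01 ρ).1
    _ = 2 * ∑ ρ ∈ R, x ρ := (Finset.mul_sum _ _ _).symm
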